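/- For every n ≥ 0, the number of partitions of n in which each part appears at most three times equals the coefficient of q^n in Σ_{m,k≥0} q^{2·C(m+1,2)+C(k+1,2)+mk} / ((q;q)_m (q;q)_k). -/

import Mathlib

noncomputable section

/-- The coefficient-wise (product) topology on `ℚ[[q]]`, so that the infinite
sums and products of formal power series below make sense. -/
instance : TopologicalSpace (PowerSeries ℚ) :=
  TopologicalSpace.induced (fun f => fun n => (PowerSeries.coeff n) f) inferInstance

/-- The formal variable `q`. -/
def q : PowerSeries ℚ := PowerSeries.X

/-- The finite q-Pochhammer symbol `(a; b)_n = ∏_{j=1}^n (1 - a b^(j-1))`. -/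
def poch (a b : PowerSeries ℚ) (n : ℕ) : PowerSeries ℚ :=
  ∏ j ∈ Finset.range n, (1 - a * b ^ j)

/-- The infinite q-Pochhammer symbol `(a; b)_∞ = ∏_{j≥1} (1 - a b^(j-1))`. -/
def pochInf (a b : PowerSeries ℚ) : PowerSeries ℚ := ∏' j : ℕ, (1 - a * b ^ j)

/-- The number of partitions of `n` (multisets of positive integers summing to
`n`) in which each part appears at most three times. -/
def p3 (n : ℕ) : ℕ :=
  Nat.card {μ : Multiset ℕ //
    (∀ a ∈ μ, 0 < a) ∧ μ.sum = n ∧ ∀ a, μ.count a ≤ 3}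


namespace PS3

open PowerSeries Finset

abbrev PS := PowerSeries ℚ

lemma continuous_coeff (n : ℕ) : Continuous (fun f : PS => coeff n f) := by
  have h : Continuous (fun f : PS => fun n => (coeff n) f) := continuous_induced_dom
  exact (continuous_apply n).comp h

instance : T2Space PS := by
  refine Topology.IsEmbedding.t2Space (f := fun f : PS => fun n => (coeff n) f) ⟨⟨rfl⟩, ?_⟩
  intro f g h
  exact PowerSeries.ext fun n => congrFun h n

instance : ContinuousMul PS := by
  constructor
  apply continuous_induced_rng.2
  apply continuous_pi
  intro n
  show Continuous fun p : PS × PS => coeff n (p.1 * p.2)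
  have h : (fun p : PS × PS => coeff n (p.1 * p.2))
      = fun p : PS × PS => ∑ ij ∈ Finset.HasAntidiagonal.antidiagonal n,
          coeff ij.1 p.1 * coeff ij.2 p.2 := by
    funext p; exact PowerSeries.coeff_mul n p.1 p.2
  rw [h]
  exact continuous_finset_sum _ fun ij _ =>
    ((continuous_coeff ij.1).comp continuous_fst).mul
      ((continuous_coeff ij.2).comp continuous_snd)

instance : ContinuousAdd PS := by
  constructor
  apply continuous_induced_rng.2
  apply continuous_pi
  intro n
  show Continuous fun p : PS × PS => coeff n (p.1 + p.2)
  simp only [map_add]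
  exact ((continuous_coeff n).comp continuous_fst).add
    ((continuous_coeff n).comp continuous_snd)

lemma hasSum_iff {ι : Type*} (F : ι → PS) (S : PS) :
    HasSum F S ↔ ∀ n, HasSum (fun i => coeff n (F i)) (coeff n S) := by
  rw [HasSum, nhds_induced, Filter.tendsto_comap_iff]
  have h : ((fun f : PS => fun n => coeff n f) ∘ fun s : Finset ι => ∑ i ∈ s, F i)
      = fun s : Finset ι => (fun n => ∑ i ∈ s, coeff n (F i)) := by
    funext s n; simp
  rw [h, tendsto_pi_nhds]
  exact Iff.rfl

lemma hasSum_mk {ι : Type*} (F : ι → PS) (T : ℕ → Finset ι)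
    (hT : ∀ n, ∀ i ∉ T n, coeff n (F i) = 0) :
    HasSum F (PowerSeries.mk fun n => ∑ i ∈ T n, coeff n (F i)) := by
  rw [hasSum_iff]
  intro n
  simpa using hasSum_sum_of_ne_finset_zero (hT n)

end PS3

namespace PS3

open PowerSeries Finset

instance : IsTopologicalSemiring PS := ⟨⟩

/-- `U t c k` is the `k`-th term of the Euler-type series in base `q^t` with shift `c`. -/
def U (t c k : ℕ) : PS := (poch (q^t) (q^t) k)⁻¹ * q ^ (t * (c * k + (k+1).choose 2))

lemma poch_succ (a b : PowerSeries ℚ) (k : ℕ) :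
    poch a b (k+1) = poch a b k * (1 - a * b^k) := Finset.prod_range_succ _ _

lemma constCoeff_factor {t j : ℕ} (ht : 0 < t) :
    constantCoeff (1 - q^t*(q^t)^j) = 1 := by
  simp [q, zero_pow ht.ne']

lemma constCoeff_poch (t k : ℕ) (ht : 0 < t) :
    constantCoeff (poch (q^t) (q^t) k) = 1 := by
  unfold poch
  rw [map_prod]
  exact Finset.prod_eq_one fun j _ => constCoeff_factor ht

lemma choose_two_succ (k : ℕ) : (k+2).choose 2 = (k+1) + (k+1).choose 2 := by
  rw [Nat.choose_succ_succ (k+1) 1, Nat.choose_one_right]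

lemma le_choose_two (k : ℕ) : k ≤ (k+1).choose 2 := by
  rw [Nat.choose_succ_succ k 1, Nat.choose_one_right]
  omega

lemma coeff_U_zero {t c k n : ℕ} (h : n < t * (c * k + (k+1).choose 2)) :
    coeff n (U t c k) = 0 := by
  unfold U
  rw [show (q : PS) = PowerSeries.X from rfl,
    PowerSeries.coeff_mul_X_pow', if_neg (by omega)]

lemma U_zero (t c : ℕ) : U t c 0 = 1 := by
  unfold U poch
  simp

lemma U_succ (t c k : ℕ) (ht : 0 < t) :
    U t c (k+1) = U t (c+1) (k+1) + (q^t * (q^t)^c) * U t (c+1) k := by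
  have hy : (1 - q^t*(q^t)^k : PS) * (1 - q^t*(q^t)^k)⁻¹ = 1 := by
    rw [mul_comm]
    exact PowerSeries.inv_mul_cancel _ (by rw [constCoeff_factor ht]; norm_num)
  have hinv : (poch (q^t) (q^t) k)⁻¹
      = (1 - q^t*(q^t)^k) * (poch (q^t) (q^t) (k+1))⁻¹ := by
    rw [poch_succ, PowerSeries.mul_inv_rev, ← mul_assoc, hy, one_mul]
  have hs : (q:PS) ^ (t * (c * (k+1) + (k+2).choose 2))
      = q ^ (t * ((c+1) * (k+1) + (k+2).choose 2))
        + (q^t * (q^t)^c) * ((1 - q^t*(q^t)^k) * q ^ (t * ((c+1) * k + (k+1).choose 2))) := by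
    rw [choose_two_succ]
    rw [← pow_mul q t c, ← pow_mul q t k, ← pow_add, ← pow_add]
    rw [sub_mul, one_mul, mul_sub, ← pow_add, ← pow_add, ← pow_add]
    rw [show t * (c * (k+1) + ((k+1) + (k+1).choose 2))
        = t + t * c + t * ((c+1) * k + (k+1).choose 2) by ring]
    rw [show t * ((c+1) * (k+1) + ((k+1) + (k+1).choose 2))
        = t + t * c + (t + t * k + t * ((c+1) * k + (k+1).choose 2)) by ring]
    ring
  unfold U
  rw [hinv]
  linear_combination ((poch (q^t) (q^t) (k+1))⁻¹ : PS) * hs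

/-- The Euler-type series `AA t c = ∑ k, U t c k`. -/
def AA (t c : ℕ) : PS :=
  PowerSeries.mk fun n => ∑ k ∈ Finset.range (n+1), coeff n (U t c k)

lemma hasSum_U (t c : ℕ) (ht : 0 < t) : HasSum (U t c) (AA t c) := by
  apply hasSum_mk
  intro n k hk
  simp only [Finset.mem_range, not_lt] at hk
  apply coeff_U_zero
  have h1 := le_choose_two k
  have h2 : c * k + (k+1).choose 2 ≤ t * (c * k + (k+1).choose 2) :=
    Nat.le_mul_of_pos_left _ ht
  omega

lemma AA_succ (t c : ℕ) (ht : 0 < t) :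
    AA t c = (1 + q^t*(q^t)^c) * AA t (c+1) := by
  set x : PS := q^t*(q^t)^c with hx
  have h1 := hasSum_U t (c+1) ht
  have h2 : HasSum (fun k => x * U t (c+1) k) (x * AA t (c+1)) := h1.mul_left x
  set v : ℕ → PS := fun k => Nat.casesOn k 0 (fun k' => x * U t (c+1) k') with hv
  have h3 : HasSum v (x * AA t (c+1)) := by
    have hinj : Function.Injective (fun k : ℕ => k + 1) := fun a b h => by simpa using h
    rw [← Function.Injective.hasSum_iff hinj ?_]
    · exact h2
    · intro m hm
      match m with
      | 0 => rfl
      | m'+1 => exact absurd ⟨m', rfl⟩ hm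
  have h4 := h1.add h3
  have h5 : (fun k => U t (c+1) k + v k) = U t c := by
    funext k
    match k with
    | 0 => simp [hv, U_zero]
    | k'+1 => rw [U_succ t c k' ht]
  rw [h5] at h4
  have h6 := (hasSum_U t c ht).unique h4
  rw [h6]; ring

lemma AA_zero (t m : ℕ) (ht : 0 < t) :
    AA t 0 = (∏ j ∈ Finset.range m, (1 + q^t*(q^t)^j)) * AA t m := by
  induction m with
  | zero => simp
  | succ m ih =>
    rw [ih, AA_succ t m ht, Finset.prod_range_succ]; ring

lemma coeff_AA (t c j : ℕ) (ht : 0 < t) (hj : j ≤ c) :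
    coeff j (AA t c) = coeff j 1 := by
  unfold AA
  rw [PowerSeries.coeff_mk]
  rw [Finset.sum_eq_single 0]
  · rw [U_zero]
  · intro k hk hk0
    apply coeff_U_zero
    have h1 := le_choose_two k
    have hk1 : 1 ≤ k := Nat.one_le_iff_ne_zero.2 hk0
    have h2 : c * k + (k+1).choose 2 ≤ t * (c * k + (k+1).choose 2) :=
      Nat.le_mul_of_pos_left _ ht
    have h3 : c ≤ c * k := Nat.le_mul_of_pos_right _ hk1
    omega
  · intro h; simp at h

end PS3

namespace PS3

open PowerSeries Finset

/-- The general term of the double series. -/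
def term (p : ℕ × ℕ) : PS :=
  q ^ (2 * (p.1+1).choose 2 + (p.2+1).choose 2 + p.1 * p.2)
    * (poch q q p.1)⁻¹ * (poch q q p.2)⁻¹

lemma coeff_term_zero {p : ℕ × ℕ} {n : ℕ} (h : n < p.1 ∨ n < p.2) :
    coeff n (term p) = 0 := by
  have ht : term p = ((poch q q p.1)⁻¹ * (poch q q p.2)⁻¹)
      * PowerSeries.X ^ (2 * (p.1+1).choose 2 + (p.2+1).choose 2 + p.1 * p.2) := by
    show term p = _ * (q:PS) ^ _
    unfold term; ring
  rw [ht, PowerSeries.coeff_mul_X_pow', if_neg]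
  have h1 := le_choose_two p.1
  have h2 := le_choose_two p.2
  omega

def S0 : PS := PowerSeries.mk fun n =>
  ∑ p ∈ (Finset.range (n+1)) ×ˢ (Finset.range (n+1)), coeff n (term p)

lemma hasSum_term : HasSum term S0 := by
  apply hasSum_mk
  intro n p hp
  apply coeff_term_zero
  simp only [Finset.mem_product, Finset.mem_range, not_and_or, not_lt] at hp
  omega

lemma constCoeff_poch1 (m : ℕ) : constantCoeff (poch q q m) = 1 := by
  have := constCoeff_poch 1 m one_pos
  simpa using this

lemma poch1_ne (m : ℕ) : poch q q m ≠ 0 := fun h => by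
  have := constCoeff_poch1 m; rw [h] at this; simp at this

lemma poch_mul (m : ℕ) :
    poch q q m * ∏ j ∈ Finset.range m, (1 + q*q^j) = poch (q^2) (q^2) m := by
  unfold poch
  rw [← Finset.prod_mul_distrib]
  exact Finset.prod_congr rfl fun j _ => by ring

lemma inv_poch2_mul (m : ℕ) :
    (poch (q^2) (q^2) m)⁻¹ * ∏ j ∈ Finset.range m, (1 + q*q^j)
      = (poch q q m)⁻¹ := by
  apply mul_right_cancel₀ (poch1_ne m)
  rw [PowerSeries.inv_mul_cancel _ (by rw [constCoeff_poch1]; norm_num)]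
  rw [mul_assoc, mul_comm _ (poch q q m), poch_mul]
  exact PowerSeries.inv_mul_cancel _ (by rw [constCoeff_poch 2 m two_pos]; norm_num)

lemma key_m (m : ℕ) :
    U 2 0 m * AA 1 0 = (q ^ (2 * (m+1).choose 2) * (poch q q m)⁻¹) * AA 1 m := by
  have hz : AA 1 0 = (∏ j ∈ Finset.range m, (1 + q*q^j)) * AA 1 m := by
    have := AA_zero 1 m one_pos
    simpa using this
  have hU : U 2 0 m = (poch (q^2) (q^2) m)⁻¹ * q ^ (2 * (m+1).choose 2) := by
    unfold U; norm_num
  rw [hz, hU]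
  linear_combination (q ^ (2 * (m+1).choose 2) * AA 1 m : PS) * inv_poch2_mul m

lemma step_B (m k : ℕ) :
    (q ^ (2 * (m+1).choose 2) * (poch q q m)⁻¹) * U 1 m k = term (m, k) := by
  have hU : U 1 m k = (poch q q k)⁻¹ * q ^ (m * k + (k+1).choose 2) := by
    unfold U; norm_num
  rw [hU]
  show _ = q ^ (2 * (m+1).choose 2 + (k+1).choose 2 + m * k) * _ * _
  rw [show 2 * (m+1).choose 2 + (k+1).choose 2 + m * k
      = 2 * (m+1).choose 2 + (m * k + (k+1).choose 2) by ring, pow_add]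
  ring

lemma step_A (W : PS) (m n : ℕ) :
    coeff n (W * AA 1 m) = ∑ k ∈ Finset.range (n+1), coeff n (W * U 1 m k) := by
  have hAA : ∀ j ≤ n, coeff j (AA 1 m)
      = ∑ k ∈ Finset.range (n+1), coeff j (U 1 m k) := by
    intro j hj
    unfold AA
    rw [PowerSeries.coeff_mk]
    apply Finset.sum_subset
    · exact Finset.range_subset_range.2 (by omega)
    · intro k _ hk
      simp only [Finset.mem_range, not_lt] at hk
      apply coeff_U_zero
      have := le_choose_two k
      omega
  rw [PowerSeries.coeff_mul]
  have : ∀ ij ∈ Finset.HasAntidiagonal.antidiagonal n,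
      coeff ij.1 W * coeff ij.2 (AA 1 m)
        = ∑ k ∈ Finset.range (n+1), coeff ij.1 W * coeff ij.2 (U 1 m k) := by
    intro ij hij
    rw [hAA ij.2 (by have := Finset.HasAntidiagonal.mem_antidiagonal.1 hij; omega), Finset.mul_sum]
  rw [Finset.sum_congr rfl this, Finset.sum_comm]
  exact Finset.sum_congr rfl fun k _ => (PowerSeries.coeff_mul n W (U 1 m k)).symm

lemma hasSum_fiber : HasSum (fun m => U 2 0 m * AA 1 0) S0 := by
  rw [hasSum_iff]
  intro n
  have hcf : ∀ m, coeff n (U 2 0 m * AA 1 0)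
      = ∑ k ∈ Finset.range (n+1), coeff n (term (m, k)) := by
    intro m
    rw [key_m, step_A]
    exact Finset.sum_congr rfl fun k _ => by rw [step_B]
  have hvan : ∀ m ∉ Finset.range (n+1), coeff n (U 2 0 m * AA 1 0) = 0 := by
    intro m hm
    rw [hcf]
    apply Finset.sum_eq_zero
    intro k _
    apply coeff_term_zero
    simp only [Finset.mem_range, not_lt] at hm
    left; omega
  have := hasSum_sum_of_ne_finset_zero (L := SummationFilter.unconditional ℕ) hvan
  convert this using 1
  show coeff n S0 = _
  unfold S0
  rw [PowerSeries.coeff_mk, Finset.sum_product]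
  exact Finset.sum_congr rfl fun m _ => (hcf m).symm

lemma S0_eq : S0 = AA 2 0 * AA 1 0 :=
  hasSum_fiber.unique ((hasSum_U 2 0 two_pos).mul_right (AA 1 0))

lemma coeff_mul_eventually_one {Z : PS} {n : ℕ}
    (hZ : ∀ j ≤ n, coeff j Z = coeff j 1) (Y : PS) :
    coeff n (Y * Z) = coeff n Y := by
  rw [PowerSeries.coeff_mul]
  rw [Finset.sum_eq_single (n, 0)]
  · rw [hZ 0 (by omega)]
    simp
  · intro ij hij hne
    have hm := Finset.HasAntidiagonal.mem_antidiagonal.1 hij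
    have hj : ij.2 ≠ 0 := by
      intro h0
      exact hne (by rw [Prod.ext_iff]; omega)
    rw [hZ ij.2 (by omega), PowerSeries.coeff_one, if_neg hj, mul_zero]
  · intro h
    exact absurd (Finset.HasAntidiagonal.mem_antidiagonal.2 (by omega)) h

lemma coeff_S0 (n : ℕ) :
    coeff n S0
      = coeff n (∏ j ∈ Finset.range n, ((1 + q^2*(q^2)^j) * (1 + q*q^j))) := by
  have h2 : AA 2 0 = (∏ j ∈ Finset.range n, (1 + q^2*(q^2)^j)) * AA 2 n :=
    AA_zero 2 n two_pos
  have h1 : AA 1 0 = (∏ j ∈ Finset.range n, (1 + q*q^j)) * AA 1 n := by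
    have := AA_zero 1 n one_pos; simpa using this
  have hZ : ∀ j ≤ n, coeff j (AA 2 n * AA 1 n) = coeff j 1 := by
    intro j hj
    rw [PowerSeries.coeff_mul]
    have : ∀ ij ∈ Finset.HasAntidiagonal.antidiagonal j,
        coeff ij.1 (AA 2 n) * coeff ij.2 (AA 1 n)
          = coeff ij.1 (1:PS) * coeff ij.2 (1:PS) := by
      intro ij hij
      have hm := Finset.HasAntidiagonal.mem_antidiagonal.1 hij
      rw [coeff_AA 2 n ij.1 two_pos (by omega), coeff_AA 1 n ij.2 one_pos (by omega)]
    rw [Finset.sum_congr rfl this, ← PowerSeries.coeff_mul, mul_one]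
  rw [S0_eq, h2, h1, Finset.prod_mul_distrib]
  rw [show (∏ j ∈ Finset.range n, (1 + q^2*(q^2)^j)) * AA 2 n
        * ((∏ j ∈ Finset.range n, (1 + q*q^j)) * AA 1 n)
      = ((∏ j ∈ Finset.range n, (1 + q^2*(q^2)^j)) * ∏ j ∈ Finset.range n, (1 + q*q^j))
        * (AA 2 n * AA 1 n) by ring]
  exact coeff_mul_eventually_one hZ _

end PS3

namespace PS3

open PowerSeries Finset

def T (n : ℕ) : Finset (Fin n → ℕ) :=
  (Fintype.piFinset fun _ : Fin n => Finset.range 4).filter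
    fun p => n = ∑ i, (i.1+1) * p i

lemma coeff_prod_eq_card (n : ℕ) :
    coeff n (∏ j ∈ Finset.range n, ((1 + q^2*(q^2)^j) * (1 + q*q^j)))
      = ((T n).card : ℚ) := by
  have hfac : ∀ j : ℕ, ((1 + q^2*(q^2)^j) * (1 + q*q^j) : PS)
      = ∑ c ∈ Finset.range 4, (q^(j+1))^c := by
    intro j
    have h : ∑ c ∈ Finset.range 4, ((q:PS)^(j+1))^c
        = 1 + q^(j+1) + (q^(j+1))^2 + (q^(j+1))^3 := by
      simp [Finset.sum_range_succ]
    rw [h]; ring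
  rw [Finset.prod_congr rfl fun j _ => hfac j,
    Finset.prod_range fun j => ∑ c ∈ Finset.range 4, ((q:PS)^(j+1))^c,
    Finset.prod_univ_sum, map_sum]
  have hterm : ∀ p : Fin n → ℕ,
      ∏ i : Fin n, ((q:PS)^(i.1+1))^(p i) = q ^ (∑ i, (i.1+1) * p i) := by
    intro p
    rw [← Finset.prod_pow_eq_pow_sum]
    exact Finset.prod_congr rfl fun i _ => by rw [← pow_mul]
  have hco : ∀ p : Fin n → ℕ,
      coeff n (∏ i : Fin n, ((q:PS)^(i.1+1))^(p i))
        = if n = ∑ i, (i.1+1) * p i then 1 else 0 := by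
    intro p
    rw [hterm p]
    exact PowerSeries.coeff_X_pow n _
  rw [Finset.sum_congr rfl fun p _ => hco p, Finset.sum_boole]
  rfl

def bld (n : ℕ) (p : Fin n → ℕ) : Multiset ℕ :=
  ∑ i : Fin n, Multiset.replicate (p i) (i.1+1)

lemma count_bld (n : ℕ) (p : Fin n → ℕ) (a : ℕ) :
    Multiset.count a (bld n p) = ∑ i : Fin n, if (i.1+1 : ℕ) = a then p i else 0 := by
  unfold bld
  rw [Multiset.count_sum']
  exact Finset.sum_congr rfl fun i _ => Multiset.count_replicate _ _ _

lemma count_bld_eq (n : ℕ) (p : Fin n → ℕ) (i : Fin n) :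
    Multiset.count (i.1+1) (bld n p) = p i := by
  rw [count_bld, Finset.sum_eq_single i]
  · simp
  · intro j _ hj
    rw [if_neg]
    intro h
    exact hj (Fin.ext (by omega))
  · intro h; exact absurd (Finset.mem_univ i) h

lemma count_bld_zero (n : ℕ) (p : Fin n → ℕ) (a : ℕ) (h : a = 0 ∨ n < a) :
    Multiset.count a (bld n p) = 0 := by
  rw [count_bld]
  apply Finset.sum_eq_zero
  intro i _
  rw [if_neg]
  have := i.2
  omega

lemma sum_bld (n : ℕ) (p : Fin n → ℕ) :
    (bld n p).sum = ∑ i : Fin n, (i.1+1) * p i := by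
  unfold bld
  rw [show (∑ i : Fin n, Multiset.replicate (p i) (i.1+1)).sum
      = Multiset.sumAddMonoidHom (∑ i : Fin n, Multiset.replicate (p i) (i.1+1)) from rfl,
    map_sum]
  apply Finset.sum_congr rfl
  intro i _
  show (Multiset.replicate (p i) (i.1+1)).sum = _
  rw [Multiset.sum_replicate, smul_eq_mul]
  ring

lemma reconstruct {n : ℕ} {μ : Multiset ℕ}
    (hpos : ∀ a ∈ μ, 0 < a) (hsum : μ.sum = n) :
    bld n (fun i => μ.count (i.1+1)) = μ := by
  ext a
  rcases Nat.eq_zero_or_pos a with rfl | ha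
  · rw [count_bld_zero n _ 0 (Or.inl rfl)]
    symm
    rw [Multiset.count_eq_zero]
    intro hm
    exact absurd (hpos 0 hm) (lt_irrefl 0)
  by_cases han : a ≤ n
  · have hrw : a = (⟨a-1, by omega⟩ : Fin n).1 + 1 := by
      show a = a - 1 + 1
      omega
    rw [hrw, count_bld_eq]
  · rw [count_bld_zero n _ a (Or.inr (by omega))]
    symm
    rw [Multiset.count_eq_zero]
    intro hm
    have := Multiset.single_le_sum (fun x _ => Nat.zero_le x) a hm
    omega

lemma p3_eq_card (n : ℕ) : p3 n = (T n).card := by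
  have e : {μ : Multiset ℕ //
      (∀ a ∈ μ, 0 < a) ∧ μ.sum = n ∧ ∀ a, μ.count a ≤ 3}
      ≃ {p : Fin n → ℕ // p ∈ T n} := by
    refine ⟨fun μ => ⟨fun i => μ.1.count (i.1+1), ?_⟩,
        fun p => ⟨bld n p.1, ?_, ?_, ?_⟩, ?_, ?_⟩
    · obtain ⟨μ, hpos, hsum, hcnt⟩ := μ
      rw [T, Finset.mem_filter]
      constructor
      · rw [Fintype.mem_piFinset]
        intro i
        rw [Finset.mem_range]
        exact Nat.lt_succ_of_le (hcnt _)
      · rw [← sum_bld n (fun i => μ.count (i.1+1)), reconstruct hpos hsum, hsum]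
    · intro a ha
      obtain ⟨i, _, hi⟩ := Multiset.mem_sum.1 ha
      rw [Multiset.eq_of_mem_replicate hi]
      omega
    · obtain ⟨p, hp⟩ := p
      rw [T, Finset.mem_filter] at hp
      rw [sum_bld, ← hp.2]
    · intro a
      obtain ⟨p, hp⟩ := p
      show Multiset.count a (bld n p) ≤ 3
      rw [T, Finset.mem_filter, Fintype.mem_piFinset] at hp
      by_cases h1 : 1 ≤ a ∧ a ≤ n
      · have hrw : a = (⟨a-1, by omega⟩ : Fin n).1 + 1 := by
          show a = a - 1 + 1
          omega
        rw [hrw, count_bld_eq]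
        have := hp.1 ⟨a-1, by omega⟩
        rw [Finset.mem_range] at this
        omega
      · rw [count_bld_zero n _ a (by omega)]
        omega
    · rintro ⟨μ, hpos, hsum, hcnt⟩
      exact Subtype.ext (reconstruct hpos hsum)
    · rintro ⟨p, hp⟩
      refine Subtype.ext (funext fun i => ?_)
      exact count_bld_eq n p i
  rw [p3, Nat.card_congr e]
  exact Nat.card_eq_finsetCard _

end PS3


theorem partitions_at_most_three_eq_coeff (n : ℕ) :
    (p3 n : ℚ)
      = PowerSeries.coeff n
          (∑' p : ℕ × ℕ,
            q ^ (2 * (p.1+1).choose 2 + (p.2+1).choose 2 + p.1 * p.2)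
              * (poch q q p.1)⁻¹ * (poch q q p.2)⁻¹) := by
  rw [show (∑' p : ℕ × ℕ,
        q ^ (2 * (p.1+1).choose 2 + (p.2+1).choose 2 + p.1 * p.2)
          * (poch q q p.1)⁻¹ * (poch q q p.2)⁻¹) = PS3.S0
      from PS3.hasSum_term.tsum_eq,
    PS3.coeff_S0, PS3.coeff_prod_eq_card, ← PS3.p3_eq_card]
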